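/- For every 1-VASS (Q,T) and states q₀, q° ∈ Q, the set boxreach((Q,T), q₀→q°) = {x° ∈ ℕ : (x°,q°) is box-reachable from (0,q₀)} is semilinear, i.e., a finite union of linear subsets of ℕ. -/

import Mathlib

/-- `IsPathFrom T q l q'`: the list of transitions `l` forms a path of the 1-VASS
with transition set `T` starting at state `q` and ending at state `q'`. -/
def IsPathFrom {Q : Type*} (T : Finset (Q × ℤ × Q)) : Q → List (Q × ℤ × Q) → Q → Prop
  | q, [], q' => q = q'
  | q, t :: ts, q' => t ∈ T ∧ t.1 = q ∧ IsPathFrom T t.2.2 ts q'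

/-- The effect of a list of transitions: the sum of the counter updates. -/
def effL {Q : Type*} (l : List (Q × ℤ × Q)) : ℤ :=
  (l.map fun t => t.2.1).sum

/-- `(x°, q°)` is box-reachable from `(0, q₀)`: there is an ℕ-path from `(0,q₀)`
to `(x°,q°)` all of whose prefix sums lie in `[0, x°]`. -/
def BoxReachConfig {Q : Type*} (T : Finset (Q × ℤ × Q)) (q₀ : Q) (x : ℤ) (qf : Q) : Prop :=
  ∃ l : List (Q × ℤ × Q), IsPathFrom T q₀ l qf ∧ effL l = x ∧
    ∀ j : ℕ, 0 ≤ effL (l.take j) ∧ effL (l.take j) ≤ x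

/-- A linear subset of `ℕ`: `{b + λ₁p₁ + ⋯ + λ_m p_m : λᵢ ∈ ℕ}`. -/
def IsLinearSetN (S : Set ℕ) : Prop :=
  ∃ (b : ℕ) (m : ℕ) (p : Fin m → ℕ),
    S = {x | ∃ lam : Fin m → ℕ, x = b + ∑ i, lam i * p i}

/-- A semilinear subset of `ℕ`: a finite union of linear sets. -/
def IsSemilinearN (S : Set ℕ) : Prop :=
  ∃ (n : ℕ) (L : Fin n → Set ℕ), (∀ i, IsLinearSetN (L i)) ∧ S = ⋃ i, L i



lemma effL_nil {Q : Type*} : effL ([] : List (Q × ℤ × Q)) = 0 := rfl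

lemma effL_append {Q : Type*} (a b : List (Q × ℤ × Q)) :
    effL (a ++ b) = effL a + effL b := by
  simp [effL]

lemma isPathFrom_append {Q : Type*} {T : Finset (Q × ℤ × Q)} {l₁ l₂ : List (Q × ℤ × Q)}
    {q q' q'' : Q} (h1 : IsPathFrom T q l₁ q') (h2 : IsPathFrom T q' l₂ q'') :
    IsPathFrom T q (l₁ ++ l₂) q'' := by
  induction l₁ generalizing q with
  | nil => have hq : q = q' := h1; subst hq; simpa using h2
  | cons t ts ih =>
    obtain ⟨ht, hq, hrest⟩ := h1
    exact ⟨ht, hq, ih hrest⟩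

lemma isPathFrom_unique {Q : Type*} {T : Finset (Q × ℤ × Q)} {l : List (Q × ℤ × Q)}
    {q q₁ q₂ : Q} (h1 : IsPathFrom T q l q₁) (h2 : IsPathFrom T q l q₂) : q₁ = q₂ := by
  induction l generalizing q with
  | nil => exact (show q = q₁ from h1).symm.trans h2
  | cons t ts ih => exact ih h1.2.2 h2.2.2

lemma isPathFrom_append_right {Q : Type*} {T : Finset (Q × ℤ × Q)} {l₁ l₂ : List (Q × ℤ × Q)}
    {q q' q'' : Q} (h : IsPathFrom T q (l₁ ++ l₂) q'') (h1 : IsPathFrom T q l₁ q') :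
    IsPathFrom T q' l₂ q'' := by
  induction l₁ generalizing q with
  | nil => have hq : q = q' := h1; subst hq; simpa using h
  | cons t ts ih => exact ih h.2.2 h1.2.2

lemma isPathFrom_split {Q : Type*} {T : Finset (Q × ℤ × Q)} {l : List (Q × ℤ × Q)}
    {q q' : Q} (h : IsPathFrom T q l q') (j : ℕ) :
    ∃ p, IsPathFrom T q (l.take j) p ∧ IsPathFrom T p (l.drop j) q' := by
  induction l generalizing q j with
  | nil =>
    refine ⟨q', ?_, ?_⟩ <;> simp only [List.take_nil, List.drop_nil]
    · exact h
    · rfl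
  | cons t ts ih =>
    cases j with
    | zero => exact ⟨q, rfl, h⟩
    | succ j =>
      obtain ⟨ht, hq, hrest⟩ := h
      obtain ⟨p, hp1, hp2⟩ := ih hrest j
      exact ⟨p, ⟨ht, hq, hp1⟩, hp2⟩

lemma isPathFrom_mem {Q : Type*} {T : Finset (Q × ℤ × Q)} {l : List (Q × ℤ × Q)}
    {q q' : Q} (h : IsPathFrom T q l q') : ∀ t ∈ l, t ∈ T := by
  induction l generalizing q with
  | nil => simp
  | cons t ts ih =>
    intro t' ht'
    rcases List.mem_cons.mp ht' with h' | h'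
    · exact h' ▸ h.1
    · exact ih h.2.2 t' h'

lemma isPathFrom_join_replicate {Q : Type*} {T : Finset (Q × ℤ × Q)} {c : List (Q × ℤ × Q)}
    {q : Q} (h : IsPathFrom T q c q) (k : ℕ) :
    IsPathFrom T q ((List.replicate k c).flatten) q := by
  induction k with
  | zero => rfl
  | succ k ih =>
    rw [List.replicate_succ, List.flatten_cons]
    exact isPathFrom_append h ih

lemma effL_join_replicate {Q : Type*} (c : List (Q × ℤ × Q)) (k : ℕ) :
    effL ((List.replicate k c).flatten) = (k : ℤ) * effL c := by
  induction k with
  | zero => simp [effL]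
  | succ k ih =>
    rw [List.replicate_succ, List.flatten_cons, effL_append, ih]
    push_cast; ring

lemma length_join_replicate {Q : Type*} (c : List (Q × ℤ × Q)) (k : ℕ) :
    ((List.replicate k c).flatten).length = k * c.length := by
  induction k with
  | zero => simp
  | succ k ih =>
    rw [List.replicate_succ, List.flatten_cons, List.length_append, ih]
    ring

lemma effL_take_join_replicate {Q : Type*} (C : List (Q × ℤ × Q)) (k m : ℕ) :
    ∃ w u, w ≤ k ∧ u ≤ C.length ∧ (w < k ∨ u = 0) ∧ (k * C.length ≤ m → w = k) ∧
      effL (((List.replicate k C).flatten).take m) = (w : ℤ) * effL C + effL (C.take u) := by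
  induction k generalizing m with
  | zero =>
    exact ⟨0, 0, le_refl _, Nat.zero_le _, Or.inr rfl, fun _ => rfl, by simp [effL]⟩
  | succ k ih =>
    rcases lt_or_ge m C.length with hm | hm
    · refine ⟨0, m, Nat.zero_le _, le_of_lt hm, Or.inl (Nat.succ_pos k), ?_, ?_⟩
      · intro hc
        exfalso
        have h1 : C.length ≤ (k+1) * C.length := Nat.le_mul_of_pos_left _ (Nat.succ_pos k)
        omega
      · rw [List.replicate_succ, List.flatten_cons, List.take_append,
          Nat.sub_eq_zero_of_le (le_of_lt hm)]
        simp [effL]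
    · obtain ⟨w, u, hw, hu, hd, hcond, heq⟩ := ih (m - C.length)
      refine ⟨w+1, u, Nat.succ_le_succ hw, hu, ?_, ?_, ?_⟩
      · rcases hd with h | h
        · exact Or.inl (Nat.succ_lt_succ h)
        · exact Or.inr h
      · intro hc
        have h2 : (k+1) * C.length = k * C.length + C.length := Nat.succ_mul _ _
        have h3 : k * C.length ≤ m - C.length := by omega
        rw [hcond h3]
      · rw [List.replicate_succ, List.flatten_cons, List.take_append,
          List.take_of_length_le hm, effL_append, heq]
        push_cast; ring

set_option maxHeartbeats 1000000 in
lemma pump {Q : Type*} [Fintype Q] (T : Finset (Q × ℤ × Q)) (q₀ qf : Q) (x : ℕ)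
    (hx : (Fintype.card Q + 1) * (T.sup (fun t => t.2.1.natAbs) + 1) ≤ x)
    (hreach : BoxReachConfig T q₀ (x : ℤ) qf) :
    ∃ e, 1 ≤ e ∧ e ≤ (Fintype.card Q + 1) * (T.sup (fun t => t.2.1.natAbs) + 1) ∧
      ∀ k : ℕ, BoxReachConfig T q₀ ((x + k * e : ℕ) : ℤ) qf := by
  classical
  obtain ⟨l, hl, heff, hbox⟩ := hreach
  set M : ℕ := T.sup (fun t => t.2.1.natAbs) + 1 with hM
  set n : ℕ := Fintype.card Q with hn
  set E : ℕ := (n + 1) * M with hE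
  have hM1 : 1 ≤ M := by omega
  have hME : M ≤ E := by rw [hE]; nlinarith
  have hxE : (E : ℤ) ≤ (x : ℤ) := by exact_mod_cast hx
  have hs0 : effL (l.take 0) = 0 := by simp [effL]
  have hslen : effL (l.take l.length) = (x : ℤ) := by
    rw [List.take_length]; exact heff
  -- step bound
  have hstep : ∀ j, effL (l.take (j+1)) ≤ effL (l.take j) + ((M : ℤ) - 1) := by
    intro j
    rcases lt_or_ge j l.length with hj | hj
    · have htake : l.take (j+1) = l.take j ++ [l[j]] := by
        rw [List.take_succ, List.getElem?_eq_getElem hj]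
        rfl
      have hmem : l[j] ∈ T := isPathFrom_mem hl _ (List.getElem_mem hj)
      have habs : (l[j]).2.1.natAbs ≤ M - 1 := by
        have h := Finset.le_sup (f := fun t : Q × ℤ × Q => t.2.1.natAbs) hmem
        omega
      have hz : (l[j]).2.1 ≤ (M : ℤ) - 1 := by
        have h1 : (l[j]).2.1 ≤ ((l[j]).2.1.natAbs : ℤ) := Int.le_natAbs
        have h2 : ((l[j]).2.1.natAbs : ℤ) ≤ (M : ℤ) - 1 := by
          omega
        linarith
      rw [htake, effL_append]
      have : effL [l[j]] = (l[j]).2.1 := by simp [effL]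
      rw [this]; linarith
    · rw [List.take_of_length_le (by omega), List.take_of_length_le hj]
      have : (1 : ℤ) ≤ (M : ℤ) := by exact_mod_cast hM1
      linarith
  -- first-crossing times
  have hfind : ∀ i : ℕ, ∃ j, ((min (i * M) E : ℕ) : ℤ) ≤ effL (l.take j) := by
    intro i
    refine ⟨l.length, ?_⟩
    rw [hslen]
    have h1 : min (i * M) E ≤ E := min_le_right _ _
    have h2 : ((min (i * M) E : ℕ) : ℤ) ≤ (E : ℤ) := by exact_mod_cast h1
    linarith
  set t : ℕ → ℕ := fun i => Nat.find (hfind i) with ht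
  have htspec : ∀ i, ((min (i * M) E : ℕ) : ℤ) ≤ effL (l.take (t i)) :=
    fun i => Nat.find_spec (hfind i)
  have htmin : ∀ i j, j < t i → effL (l.take j) < ((min (i * M) E : ℕ) : ℤ) :=
    fun i j hj => lt_of_not_ge (Nat.find_min (hfind i) hj)
  have htlen : ∀ i, t i ≤ l.length := by
    intro i
    apply Nat.find_min'
    rw [hslen]
    have h1 : min (i * M) E ≤ E := min_le_right _ _
    have h2 : ((min (i * M) E : ℕ) : ℤ) ≤ (E : ℤ) := by exact_mod_cast h1
    linarith
  have hlev : ∀ i, i ≤ n + 1 → min (i * M) E = i * M := by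
    intro i hi
    exact min_eq_left (by rw [hE]; exact Nat.mul_le_mul_right _ hi)
  have htpos : ∀ i, 1 ≤ i → 0 < t i := by
    intro i hi
    rcases Nat.eq_zero_or_pos (t i) with h | h
    case inr => exact h
    · exfalso
      have := htspec i
      rw [h, hs0] at this
      have hge : M ≤ min (i * M) E := le_min (Nat.le_mul_of_pos_left _ hi) hME
      have : ((min (i * M) E : ℕ) : ℤ) ≥ 1 := by
        have : 1 ≤ min (i * M) E := le_trans hM1 hge
        exact_mod_cast this
      omega
  have htup : ∀ i, 1 ≤ i → effL (l.take (t i)) < ((min (i * M) E : ℕ) : ℤ) + M := by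
    intro i hi
    obtain ⟨u, hu⟩ : ∃ u, t i = u + 1 := ⟨t i - 1, by have := htpos i hi; omega⟩
    have h1 : effL (l.take u) < ((min (i * M) E : ℕ) : ℤ) := htmin i u (by omega)
    have h2 := hstep u
    rw [hu]
    have : (1 : ℤ) ≤ (M : ℤ) := by exact_mod_cast hM1
    linarith
  have htle : ∀ i i', ((min (i * M) E : ℕ) : ℤ) ≤ effL (l.take (t i')) → t i ≤ t i' :=
    fun i i' h => Nat.find_min' (hfind i) h
  clear_value t
  -- pigeonhole on states at crossing times
  have hsplitAll : ∀ j : ℕ, ∃ p, IsPathFrom T q₀ (l.take j) p ∧ IsPathFrom T p (l.drop j) qf :=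
    fun j => isPathFrom_split hl j
  choose st hst1 hst2 using hsplitAll
  have hcard : Fintype.card Q < Fintype.card (Fin (n + 1)) := by simp [hn]
  obtain ⟨i₁, i₂, hne, hFeq⟩ :=
    Fintype.exists_ne_map_eq_of_card_lt (fun i : Fin (n + 1) => st (t ((i : ℕ) + 1))) hcard
  have key : ∃ I J : ℕ, 1 ≤ I ∧ I < J ∧ J ≤ n + 1 ∧ st (t I) = st (t J) := by
    rcases Ne.lt_or_gt hne with h | h
    · have h' : (i₁ : ℕ) < (i₂ : ℕ) := h
      exact ⟨(i₁ : ℕ) + 1, (i₂ : ℕ) + 1, by omega, by omega, by have := i₂.isLt; omega, hFeq⟩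
    · have h' : (i₂ : ℕ) < (i₁ : ℕ) := h
      exact ⟨(i₂ : ℕ) + 1, (i₁ : ℕ) + 1, by omega, by omega, by have := i₁.isLt; omega, hFeq.symm⟩
  obtain ⟨I, J, hI1, hIJ, hJn, hstEq⟩ := key
  have hlevI : min (I * M) E = I * M := hlev I (by omega)
  have hlevJ : min (J * M) E = J * M := hlev J hJn
  set a := t I with ha
  set b := t J with hb
  have hsaLB : ((I * M : ℕ) : ℤ) ≤ effL (l.take a) := by
    have := htspec I; rwa [hlevI] at this
  have hsaUB : effL (l.take a) < ((I * M : ℕ) : ℤ) + M := by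
    have := htup I hI1; rwa [hlevI] at this
  have hsbLB : ((J * M : ℕ) : ℤ) ≤ effL (l.take b) := by
    have := htspec J; rwa [hlevJ] at this
  have hsbUB : effL (l.take b) < ((J * M : ℕ) : ℤ) + M := by
    have := htup J (by omega); rwa [hlevJ] at this
  have halen : a ≤ l.length := htlen I
  have hblen : b ≤ l.length := htlen J
  have hab : a < b := by
    have h1 : a ≤ b := by
      apply htle
      rw [hlevI]
      have h2 : ((I * M : ℕ) : ℤ) ≤ ((J * M : ℕ) : ℤ) := by
        have : I * M ≤ J * M := Nat.mul_le_mul_right _ (by omega)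
        exact_mod_cast this
      linarith [hsbLB]
    have h2 : a ≠ b := by
      intro hcon
      have h3 : I * M + M ≤ J * M := by
        calc I * M + M = (I + 1) * M := (Nat.succ_mul I M).symm
          _ ≤ J * M := Nat.mul_le_mul_right _ (by omega)
      have h4 : ((I * M : ℕ) : ℤ) + ((M : ℕ) : ℤ) ≤ ((J * M : ℕ) : ℤ) := by exact_mod_cast h3
      rw [hcon] at hsaUB
      linarith [hsbLB, hsaUB]
    omega
  set e' : ℤ := effL (l.take b) - effL (l.take a) with he'
  clear_value e'
  have he'1 : 1 ≤ e' := by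
    have h3 : I * M + M ≤ J * M := by
      calc I * M + M = (I + 1) * M := (Nat.succ_mul I M).symm
        _ ≤ J * M := Nat.mul_le_mul_right _ (by omega)
    have h4 : ((I * M : ℕ) : ℤ) + ((M : ℕ) : ℤ) ≤ ((J * M : ℕ) : ℤ) := by exact_mod_cast h3
    have h5 : (0 : ℤ) < effL (l.take b) - effL (l.take a) := by linarith [hsaUB, hsbLB]
    omega
  have he'E : e' ≤ (E : ℤ) - 1 := by
    have h3 : J * M + M ≤ E + I * M := by
      rw [hE]
      have h3a : J * M ≤ (n + 1) * M := Nat.mul_le_mul_right M hJn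
      have h3b : M ≤ I * M := Nat.le_mul_of_pos_left M hI1
      linarith
    have h4 : ((J * M : ℕ) : ℤ) + ((M : ℕ) : ℤ) ≤ ((E : ℕ) : ℤ) + ((I * M : ℕ) : ℤ) := by
      exact_mod_cast h3
    have h5 : effL (l.take b) - effL (l.take a) < (E : ℤ) := by linarith [hsaLB, hsbUB]
    omega
  set e : ℕ := e'.toNat with he
  have hee' : (e : ℤ) = e' := Int.toNat_of_nonneg (by linarith)
  clear_value e
  refine ⟨e, by omega, by
    have : (e : ℤ) ≤ (E : ℤ) - 1 := by rw [hee']; exact he'E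
    have hEe : e ≤ E := by omega
    rw [hE, hn, hM] at hEe; exact hEe, ?_⟩
  -- the cycle
  set c : ℕ := b - a with hc
  set C : List (Q × ℤ × Q) := (l.drop a).take c with hC
  have hClen : C.length = c := by
    rw [hC]; rw [List.length_take, List.length_drop]; omega
  have htake_b : l.take b = l.take a ++ C := by
    have hbac : b = a + c := by omega
    rw [hC, hbac, List.take_add]
  have heC : effL C = e' := by
    have h1 := congrArg effL htake_b
    rw [effL_append] at h1
    rw [he']; linarith
  have hCpath : IsPathFrom T (st b) C (st b) := by
    have h1 : IsPathFrom T q₀ (l.take a ++ C) (st b) := htake_b ▸ hst1 b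
    have h2 : IsPathFrom T (st a) C (st b) := isPathFrom_append_right h1 (hst1 a)
    rwa [hstEq] at h2
  intro k
  set Ck : List (Q × ℤ × Q) := (List.replicate k C).flatten with hCk
  have hCklen : Ck.length = k * c := by rw [hCk, length_join_replicate, hClen]
  refine ⟨l.take b ++ (Ck ++ l.drop b), ?_, ?_, ?_⟩
  · exact isPathFrom_append (hst1 b)
      (isPathFrom_append (isPathFrom_join_replicate hCpath k) (hst2 b))
  · rw [effL_append, effL_append, hCk, effL_join_replicate, heC]
    have h3 : effL (l.drop b) = (x : ℤ) - effL (l.take b) := by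
      have h4 := congrArg effL (List.take_append_drop b l)
      rw [effL_append, heff] at h4
      linarith
    rw [h3]
    push_cast
    rw [hee']
    ring
  · intro jj
    have hke : (0 : ℤ) ≤ (k : ℤ) * e' := mul_nonneg (by positivity) (by linarith)
    have htarget : ((x + k * e : ℕ) : ℤ) = (x : ℤ) + (k : ℤ) * e' := by
      push_cast; rw [hee']
    have hlenb : (l.take b).length = b := by
      rw [List.length_take]; omega
    rcases le_or_gt jj b with hjj | hjj
    · have heqt : (l.take b ++ (Ck ++ l.drop b)).take jj = l.take jj := by
        rw [List.take_append, hlenb, Nat.sub_eq_zero_of_le hjj,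
          List.take_zero, List.append_nil, List.take_take, min_eq_left hjj]
      rw [heqt, htarget]
      exact ⟨(hbox jj).1, by linarith [(hbox jj).2]⟩
    · have hdecomp : effL ((l.take b ++ (Ck ++ l.drop b)).take jj)
          = effL (l.take b) + effL (Ck.take (jj - b)) + effL ((l.drop b).take (jj - b - k * c)) := by
        rw [List.take_append, List.take_append, hlenb, hCklen,
          List.take_of_length_le (by rw [hlenb]; omega), effL_append, effL_append]
        ring
      obtain ⟨w, u, hwk, huc, hdisj, hcond, heqJ⟩ := effL_take_join_replicate C k (jj - b)
      rw [hClen] at huc hcond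
      rw [← hCk] at heqJ
      rw [heC] at heqJ
      have hCtu : effL (C.take u) = effL (l.take (a + u)) - effL (l.take a) := by
        have h5 : C.take u = (l.drop a).take u := by
          rw [hC, List.take_take, min_eq_left huc]
        have h6 := congrArg effL (List.take_add (l := l) (i := a) (j := u))
        rw [effL_append] at h6
        rw [h5]; linarith
      have hCt3 : ∀ v, effL ((l.drop b).take v) = effL (l.take (b + v)) - effL (l.take b) := by
        intro v
        have h6 := congrArg effL (List.take_add (l := l) (i := b) (j := v))
        rw [effL_append] at h6
        linarith
      have hsb_eq : effL (l.take b) = effL (l.take a) + e' := by rw [he']; ring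
      rcases le_or_gt (jj - b) (k * c) with hm | hm
      · have hv : jj - b - k * c = 0 := by omega
        rw [hdecomp, hv, List.take_zero, heqJ, hCtu, htarget]
        have hau := hbox (a + u)
        have hsa := hbox a
        have hsb := hbox b
        have hwnn : (0 : ℤ) ≤ (w : ℤ) * e' := mul_nonneg (by positivity) (by linarith)
        constructor
        · have : effL ([] : List (Q × ℤ × Q)) = 0 := rfl
          rw [this]
          have := hsb_eq
          linarith [hau.1]
        · have : effL ([] : List (Q × ℤ × Q)) = 0 := rfl
          rw [this]
          rcases hdisj with hwlt | hu0
          · have h7 : ((w : ℤ) + 1) * e' ≤ (k : ℤ) * e' := by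
              apply mul_le_mul_of_nonneg_right _ (by linarith : (0:ℤ) ≤ e')
              have : (w : ℤ) + 1 ≤ (k : ℤ) := by exact_mod_cast hwlt
              linarith
            linarith [hau.2, hsb_eq, h7]
          · rw [hu0]
            simp only [Nat.add_zero]
            have h8 : (w : ℤ) * e' ≤ (k : ℤ) * e' := by
              apply mul_le_mul_of_nonneg_right _ (by linarith : (0:ℤ) ≤ e')
              exact_mod_cast hwk
            linarith [hsb.2]
      · have hw : w = k := hcond (by omega)
        have hu0 : u = 0 := hdisj.resolve_left (by omega)
        rw [hdecomp, heqJ, hw, hu0, hCt3 (jj - b - k * c), htarget]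
        have hbv := hbox (b + (jj - b - k * c))
        have h9 : effL (C.take 0) = 0 := by simp [effL]
        rw [h9]
        constructor
        · linarith [hbv.1, hke]
        · linarith [hbv.2]

lemma semilinear_of_pump (S : Set ℕ) (E : ℕ) (hE : 1 ≤ E)
    (hpump : ∀ x ∈ S, E ≤ x → ∃ e, 1 ≤ e ∧ e ≤ E ∧ ∀ k : ℕ, x + k * e ∈ S) :
    IsSemilinearN S := by
  classical
  rcases S.eq_empty_or_nonempty with hS | ⟨s₀, hs₀⟩
  · exact ⟨0, Fin.elim0, fun i => i.elim0, by rw [hS, Set.iUnion_of_empty]⟩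
  · set P : ℕ → ℕ → ℕ → Prop :=
      fun e r y => y ∈ S ∧ E ≤ y ∧ y % e = r ∧ ∀ k : ℕ, y + k * e ∈ S with hP
    set g : ℕ → ℕ → Set ℕ :=
      fun bb pp => {y | ∃ lam : Fin 1 → ℕ, y = bb + ∑ i, lam i * pp} with hg
    have hgmem : ∀ bb pp y, y ∈ g bb pp ↔ ∃ cc : ℕ, y = bb + cc * pp := by
      intro bb pp y
      constructor
      · rintro ⟨lam, h⟩
        exact ⟨lam 0, by simpa [Fin.sum_univ_one] using h⟩
      · rintro ⟨cc, h⟩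
        exact ⟨fun _ => cc, by simpa [Fin.sum_univ_one] using h⟩
    have hglin : ∀ bb pp, IsLinearSetN (g bb pp) := fun bb pp => ⟨bb, 1, fun _ => pp, rfl⟩
    set f : (Fin (E+1) × Fin (E+1)) ⊕ Fin E → Set ℕ := fun i =>
      Sum.elim
        (fun er : Fin (E+1) × Fin (E+1) =>
          if h : ∃ y, P (er.1 : ℕ) (er.2 : ℕ) y then
            g (sInf {y | P (er.1 : ℕ) (er.2 : ℕ) y}) (er.1 : ℕ)
          else g s₀ 0)
        (fun j : Fin E => if (j : ℕ) ∈ S then g (j : ℕ) 0 else g s₀ 0) i with hf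
    have hlin : ∀ i, IsLinearSetN (f i) := by
      rintro (⟨er⟩ | j) <;> simp only [hf, Sum.elim_inl, Sum.elim_inr] <;> split_ifs <;>
        exact hglin _ _
    have hsub : ∀ i, f i ⊆ S := by
      rintro (⟨er⟩ | j) y hy <;> simp only [hf, Sum.elim_inl, Sum.elim_inr] at hy
      · split_ifs at hy with hex
        · obtain ⟨cc, hcc⟩ := (hgmem _ _ _).mp hy
          have hm := Nat.sInf_mem hex
          rw [hcc]
          exact hm.2.2.2 cc
        · obtain ⟨cc, hcc⟩ := (hgmem _ _ _).mp hy
          rw [hcc]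
          simpa using hs₀
      · split_ifs at hy with hjS
        · obtain ⟨cc, hcc⟩ := (hgmem _ _ _).mp hy
          rw [hcc]
          simpa using hjS
        · obtain ⟨cc, hcc⟩ := (hgmem _ _ _).mp hy
          rw [hcc]
          simpa using hs₀
    have hcover : S ⊆ ⋃ i, f i := by
      intro y hy
      rcases lt_or_ge y E with hyE | hyE
      · refine Set.mem_iUnion.mpr ⟨Sum.inr ⟨y, hyE⟩, ?_⟩
        simp only [hf, Sum.elim_inr]
        rw [if_pos hy]
        exact (hgmem _ _ _).mpr ⟨0, by simp⟩
      · obtain ⟨e, he1, heE, hk⟩ := hpump y hy hyE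
        have hrlt : y % e < e := Nat.mod_lt _ (by omega)
        refine Set.mem_iUnion.mpr ⟨Sum.inl (⟨e, by omega⟩, ⟨y % e, by omega⟩), ?_⟩
        have hPy : P e (y % e) y := ⟨hy, hyE, rfl, hk⟩
        have hex : ∃ z, P e (y % e) z := ⟨y, hPy⟩
        simp only [hf, Sum.elim_inl]
        rw [dif_pos hex]
        have hmP : P e (y % e) (sInf {z | P e (y % e) z}) := Nat.sInf_mem hex
        have hmle : sInf {z | P e (y % e) z} ≤ y := Nat.sInf_le hPy
        have hdvd : e ∣ y - sInf {z | P e (y % e) z} :=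
          (Nat.modEq_iff_dvd' hmle).mp (show _ % e = y % e from hmP.2.2.1)
        refine (hgmem _ _ _).mpr ⟨(y - sInf {z | P e (y % e) z}) / e, ?_⟩
        rw [Nat.div_mul_cancel hdvd]
        omega
    have hSeq : S = ⋃ i, f i := Set.Subset.antisymm hcover (Set.iUnion_subset hsub)
    obtain ⟨nn, ⟨eqv⟩⟩ : ∃ nn, Nonempty ((Fin (E+1) × Fin (E+1)) ⊕ Fin E ≃ Fin nn) :=
      ⟨_, ⟨Fintype.equivFin _⟩⟩
    refine ⟨nn, fun j => f (eqv.symm j), fun j => hlin _, ?_⟩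
    rw [hSeq]
    ext y
    simp only [Set.mem_iUnion]
    constructor
    · rintro ⟨i, hi⟩
      exact ⟨eqv i, by simpa using hi⟩
    · rintro ⟨j, hj⟩
      exact ⟨eqv.symm j, hj⟩


/-- For every 1-VASS and states `q₀, q°`, the set of counter values `x°` such that
`(x°,q°)` is box-reachable from `(0,q₀)` is semilinear. -/
theorem boxReach_1VASS_semilinear {Q : Type*} [Fintype Q]
    (T : Finset (Q × ℤ × Q)) (q₀ qf : Q) :
    IsSemilinearN {x : ℕ | BoxReachConfig T q₀ (x : ℤ) qf} := by
  classical
  apply semilinear_of_pump _ ((Fintype.card Q + 1) * (T.sup (fun t => t.2.1.natAbs) + 1))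
  · have h1 : 0 < (Fintype.card Q + 1) * (T.sup (fun t => t.2.1.natAbs) + 1) :=
      Nat.mul_pos (by omega) (by omega)
    omega
  · intro x hx hEx
    exact pump T q₀ qf x hEx hx
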